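/- In the polynomial ring F_q[x_1,...,x_n], for any index a < n and integer m ≥ 1, the identity Σ_{k=0}^{m-1} (x_n^e)^{1 + e^{-1}(q^m - q^{m-k})} · (x_a^q - x_a x_n^{q-1})^{q^{m-k-1}} = x_a^{q^m} x_n^e − x_a x_n^{q^m + e - 1} holds, where e divides q−1 (so that e^{-1}(q^m - q^{m-k}) is a nonnegative integer). -/

import Mathlib

open MvPolynomial

/-- The telescoping identity
`Σ_{k=0}^{m-1} (x_n^e)^{1 + e⁻¹(q^m - q^{m-k})} · (x_a^q - x_a x_n^{q-1})^{q^{m-k-1}}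
  = x_a^{q^m} x_n^e − x_a x_n^{q^m + e - 1}`
in `F_q[x_1, …, x_{n+1}]`, where `x_{n+1}` plays the role of `x_n` of the paper. -/
theorem stmt_2 (p r q n m e : ℕ) (hp : p.Prime) (hr : 1 ≤ r) (hq : q = p ^ r)
    (F : Type) [Field F] [CharP F p] [Fintype F] (hF : Fintype.card F = q)
    (hm : 1 ≤ m) (he : e ∣ q - 1) (he0 : 0 < e) (a : Fin n) :
    ∑ k ∈ Finset.range m,
        ((X (Fin.last n) : MvPolynomial (Fin (n + 1)) F) ^ e) ^ (1 + (q ^ m - q ^ (m - k)) / e) *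
          (X a.castSucc ^ q - X a.castSucc * X (Fin.last n) ^ (q - 1)) ^ q ^ (m - k - 1)
      = X a.castSucc ^ q ^ m * X (Fin.last n) ^ e
          - X a.castSucc * X (Fin.last n) ^ (q ^ m + e - 1) := by
  have hfact : Fact p.Prime := ⟨hp⟩
  have hq1 : 1 ≤ q := by subst hq; exact Nat.one_le_pow _ _ hp.pos
  set Z : MvPolynomial (Fin (n+1)) F := X a.castSucc with hZ
  set Y : MvPolynomial (Fin (n+1)) F := X (Fin.last n) with hY
  set g : ℕ → MvPolynomial (Fin (n+1)) F :=
    fun i => Z ^ q ^ i * Y ^ (q ^ m - q ^ i + e) with hg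
  have hdvd : ∀ i, i ≤ m → e ∣ q ^ m - q ^ i := by
    intro i hi
    have h1 : q ^ m - q ^ i = q ^ i * (q ^ (m - i) - 1) := by
      rw [Nat.mul_sub, Nat.mul_one, ← pow_add]
      congr 2
      omega
    rw [h1]
    exact Dvd.dvd.mul_left (he.trans (by simpa using Nat.sub_dvd_pow_sub_pow q 1 (m - i))) _
  have key : ∀ k ∈ Finset.range m,
      (Y ^ e) ^ (1 + (q ^ m - q ^ (m - k)) / e) *
          (Z ^ q - Z * Y ^ (q - 1)) ^ q ^ (m - k - 1)
        = g (m - k) - g (m - k - 1) := by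
    intro k hk
    rw [Finset.mem_range] at hk
    obtain ⟨j, hj⟩ : ∃ j, m - k = j + 1 := ⟨m - k - 1, by omega⟩
    have hjk : m - k - 1 = j := by omega
    rw [hj]
    simp only [Nat.add_sub_cancel]
    have hqj : q ^ j = p ^ (r * j) := by subst hq; rw [pow_mul]
    have hchar : (Z ^ q - Z * Y ^ (q - 1)) ^ q ^ j
        = (Z ^ q) ^ q ^ j - (Z * Y ^ (q - 1)) ^ q ^ j := by
      rw [hqj, sub_pow_char_pow]
    have h1 : q ^ (j + 1) ≤ q ^ m := Nat.pow_le_pow_right hq1 (by omega)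
    have h2 : q ^ j ≤ q ^ (j + 1) := Nat.pow_le_pow_right hq1 (by omega)
    have h3 : (q - 1) * q ^ j = q ^ (j + 1) - q ^ j := by
      rw [Nat.sub_mul, one_mul, pow_succ, mul_comm (q ^ j) q]
    have e1 : e * (1 + (q ^ m - q ^ (j + 1)) / e) = (q ^ m - q ^ (j + 1)) + e := by
      rw [Nat.mul_add, Nat.mul_one, Nat.mul_div_cancel' (hdvd (j + 1) (by omega))]
      omega
    have e2 : e * (1 + (q ^ m - q ^ (j + 1)) / e) + (q - 1) * q ^ j
        = (q ^ m - q ^ j) + e := by omega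
    have e3 : q * q ^ j = q ^ (j + 1) := by rw [pow_succ, mul_comm]
    rw [hchar, mul_pow, ← pow_mul Y e, ← pow_mul Z q, ← pow_mul Y (q - 1), e3,
      mul_comm (q - 1) (q ^ j)]
    simp only [hg]
    rw [mul_sub]
    congr 1
    · rw [← e1, mul_comm]
    · have e2' : q ^ j * (q - 1) + e * (1 + (q ^ m - q ^ (j + 1)) / e) = q ^ m - q ^ j + e := by
        rw [mul_comm (q ^ j), ← e2]; omega
      rw [mul_comm (Y ^ _), mul_assoc, ← pow_add, e2']
  rw [Finset.sum_congr rfl key, ← Finset.sum_range_reflect (fun k => g (m - k) - g (m - k - 1)) m]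
  have key2 : ∀ k ∈ Finset.range m,
      g (m - (m - 1 - k)) - g (m - (m - 1 - k) - 1) = g (k + 1) - g k := by
    intro k hk
    rw [Finset.mem_range] at hk
    congr 1 <;> congr 1 <;> omega
  rw [Finset.sum_congr rfl key2, Finset.sum_range_sub]
  have h4 : q ^ m - 1 + e = q ^ m + e - 1 := by
    have : 1 ≤ q ^ m := Nat.one_le_pow _ _ (by omega)
    omega
  simp only [hg, pow_zero, pow_one, Nat.sub_self, zero_add, h4]
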